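/- Let f_n : {0,1}^n → ℂ be symmetric functions (invariant under all permutations of coordinates) such that: (a) Σ_{x ∈ {0,1}^n} |f_n(x)| ≤ B for all n, and (b) there exist c ∈ ℂ and f : {0,1} → ℂ such that for each fixed k and each (x_1,...,x_k) ∈ {0,1}^k, Σ_{z ∈ {0,1}^{n-k}} f_n(x_1,...,x_k,z_1,...,z_{n-k}) → c·f(x_1)···f(x_k) as n → ∞. Then for every continuous G : [0,1] → ℂ, Σ_{x ∈ {0,1}^n} f_n(x) G(N(x)/n) → c·G(f(1)) as n → ∞, where N(x) is the number of coordinates of x equal to 1. -/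

import Mathlib

open Finset Filter Topology

/-- The number of coordinates of `x : {0,1}^n` equal to `1` (i.e. `true`). -/
def countOnes {n : ℕ} (x : Fin n → Bool) : ℕ := ∑ i, if x i then 1 else 0

lemma countOnes_le {n : ℕ} (x : Fin n → Bool) : countOnes x ≤ n := by
  classical
  calc countOnes x ≤ ∑ _i : Fin n, 1 := Finset.sum_le_sum (fun i _ => by split <;> simp)
  _ = n := by simp

lemma tmem {n : ℕ} (x : Fin n → Bool) :
    ((countOnes x : ℝ) / n) ∈ Set.Icc (0:ℝ) 1 := by
  constructor
  · positivity
  · rcases Nat.eq_zero_or_pos n with h | h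
    · simp [h, countOnes, Finset.sum_const]
    · rw [div_le_one (by exact_mod_cast h)]
      exact_mod_cast countOnes_le x

lemma bound_lemma (f : (n : ℕ) → (Fin n → Bool) → ℂ) (B : ℝ)
    (hB : ∀ n, ∑ x : Fin n → Bool, ‖f n x‖ ≤ B)
    (n : ℕ) (h : ℝ → ℂ) (C : ℝ) (hC : ∀ t ∈ Set.Icc (0:ℝ) 1, ‖h t‖ ≤ C) :
    ‖∑ x : Fin n → Bool, f n x * h ((countOnes x : ℝ) / n)‖ ≤ B * C := by
  have hC0 : 0 ≤ C := le_trans (norm_nonneg _) (hC 0 (by norm_num))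
  calc ‖∑ x : Fin n → Bool, f n x * h ((countOnes x : ℝ) / n)‖
      ≤ ∑ x : Fin n → Bool, ‖f n x * h ((countOnes x : ℝ) / n)‖ := norm_sum_le _ _
    _ ≤ ∑ x : Fin n → Bool, ‖f n x‖ * C := by
        refine Finset.sum_le_sum (fun x _ => ?_)
        rw [norm_mul]
        exact mul_le_mul_of_nonneg_left (hC _ (tmem x)) (norm_nonneg _)
    _ = (∑ x : Fin n → Bool, ‖f n x‖) * C := by
        rw [← Finset.sum_mul]
    _ ≤ B * C := mul_le_mul_of_nonneg_right (hB n) hC0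

lemma perm_extend {m n : ℕ} (hmn : m ≤ n) (v : Fin m → Fin n) (hv : Function.Injective v) :
    ∃ π : Equiv.Perm (Fin n), ∀ j : Fin m, π (Fin.castLE hmn j) = v j := by
  classical
  set s : Finset (Fin n) := univ.filter (fun i => (i : ℕ) < m) with hs
  set F : Fin n → Fin n := fun i => if h : (i : ℕ) < m then v ⟨i, h⟩ else i with hF
  have hfst : Finset.image F s ⊆ (univ : Finset (Fin n)) := Finset.subset_univ _
  have hinj : Set.InjOn F s := by
    intro a ha b hb hab
    simp only [hs, Finset.coe_filter, Set.mem_setOf_eq, Finset.mem_univ, true_and] at ha hb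
    simp only [hF, dif_pos ha, dif_pos hb] at hab
    have h2 := hv hab
    have h3 : (a : ℕ) = (b : ℕ) := congrArg (fun t : Fin m => (t : ℕ)) h2
    exact Fin.ext h3
  obtain ⟨g, hg⟩ := Finset.exists_equiv_extend_of_card_eq
    (by simp : Fintype.card (Fin n) = #(univ : Finset (Fin n))) hfst hinj
  refine ⟨g.trans (Equiv.subtypeUnivEquiv (fun x => Finset.mem_univ x)), ?_⟩
  intro j
  have hmem : (Fin.castLE hmn j) ∈ s := by
    simp only [hs, Finset.mem_filter, Finset.mem_univ, true_and, Fin.coe_castLE]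
    exact j.2
  have := hg _ hmem
  simp only [Equiv.trans_apply, Equiv.subtypeUnivEquiv_apply]
  rw [this]
  simp [hF, Fin.castLE, j.2]

lemma Tv_eq (f : (n : ℕ) → (Fin n → Bool) → ℂ)
    (hsym : ∀ n (π : Equiv.Perm (Fin n)) (x : Fin n → Bool), f n (x ∘ π) = f n x)
    {m n : ℕ} (v : Fin m → Fin n) (hv : Function.Injective v) :
    ∑ x : Fin n → Bool, f n x * ∏ j : Fin m, (if x (v j) then (1:ℂ) else 0)
    = ∑ y ∈ univ.filter
        (fun y : Fin n → Bool => ∀ i : Fin n, (h : (i : ℕ) < m) → y i = true), f n y := by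
  classical
  have hmn : m ≤ n := by
    have := Fintype.card_le_of_injective v hv
    simpa using this
  obtain ⟨π, hπ⟩ := perm_extend hmn v hv
  have hbij : Function.Bijective (fun x : Fin n → Bool => x ∘ π) := by
    refine Function.bijective_iff_has_inverse.mpr ⟨fun y => y ∘ ⇑π.symm, fun x => ?_, fun y => ?_⟩
    · funext i; simp
    · funext i; simp
  have step1 : ∑ x : Fin n → Bool, f n x * ∏ j : Fin m, (if x (v j) then (1:ℂ) else 0)
      = ∑ y : Fin n → Bool, f n y * ∏ j : Fin m,
          (if y (Fin.castLE hmn j) then (1:ℂ) else 0) := by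
    refine Fintype.sum_bijective _ hbij _ _ (fun x => ?_)
    have h1 : f n x = f n (x ∘ π) := (hsym n π x).symm
    rw [h1]
    congr 1
    refine Finset.prod_congr rfl (fun j _ => ?_)
    have : (x ∘ ⇑π) (Fin.castLE hmn j) = x (v j) := by
      simp only [Function.comp_apply, hπ j]
    rw [this]
  rw [step1, Finset.sum_filter]
  refine Finset.sum_congr rfl (fun y _ => ?_)
  by_cases hP : ∀ i : Fin n, (h : (i : ℕ) < m) → y i = true
  · rw [if_pos hP, Finset.prod_eq_one (fun j _ => ?_), mul_one]
    rw [if_pos (hP (Fin.castLE hmn j) j.2)]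
  · rw [if_neg hP]
    push_neg at hP
    obtain ⟨i, hi, hyi⟩ := hP
    have hz : (if y (Fin.castLE hmn (⟨(i : ℕ), hi⟩ : Fin m)) then (1:ℂ) else 0) = 0 := by
      have hc : Fin.castLE hmn (⟨(i : ℕ), hi⟩ : Fin m) = i := by
        apply Fin.ext; rfl
      rw [hc, if_neg hyi]
    rw [Finset.prod_eq_zero (Finset.mem_univ (⟨(i : ℕ), hi⟩ : Fin m)) hz, mul_zero]

lemma expand_pow {m n : ℕ} (x : Fin n → Bool) :
    ((countOnes x : ℂ)) ^ m
      = ∑ v : Fin m → Fin n, ∏ j : Fin m, (if x (v j) then (1:ℂ) else 0) := by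
  classical
  have h1 : ((countOnes x : ℕ) : ℂ) = ∑ i : Fin n, (if x i then (1:ℂ) else 0) := by
    rw [countOnes]
    push_cast
    rfl
  rw [h1]
  have h2 : (∑ i : Fin n, (if x i then (1:ℂ) else 0)) ^ m
      = ∏ _j : Fin m, (∑ i : Fin n, (if x i then (1:ℂ) else 0)) := by
    rw [Finset.prod_const, Finset.card_univ, Fintype.card_fin]
  rw [h2, Finset.prod_univ_sum]
  rw [Fintype.piFinset_univ]

lemma card_inj (m n : ℕ) :
    #(univ.filter (fun v : Fin m → Fin n => Function.Injective v)) = n.descFactorial m := by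
  classical
  rw [← Fintype.card_subtype]
  rw [Fintype.card_congr (Equiv.subtypeInjectiveEquivEmbedding (Fin m) (Fin n))]
  rw [Fintype.card_embedding_eq, Fintype.card_fin, Fintype.card_fin]

lemma moment_decomp (f : (n : ℕ) → (Fin n → Bool) → ℂ)
    (hsym : ∀ n (π : Equiv.Perm (Fin n)) (x : Fin n → Bool), f n (x ∘ π) = f n x)
    (m n : ℕ) :
    ∑ x : Fin n → Bool, f n x * (countOnes x : ℂ) ^ m
      = (n.descFactorial m : ℂ) * (∑ y ∈ univ.filter
          (fun y : Fin n → Bool => ∀ i : Fin n, (h : (i : ℕ) < m) → y i = true), f n y)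
        + ∑ v ∈ univ.filter (fun v : Fin m → Fin n => ¬ Function.Injective v),
            ∑ x : Fin n → Bool, f n x * ∏ j : Fin m, (if x (v j) then (1:ℂ) else 0) := by
  classical
  have h1 : ∑ x : Fin n → Bool, f n x * (countOnes x : ℂ) ^ m
      = ∑ v : Fin m → Fin n, ∑ x : Fin n → Bool,
          f n x * ∏ j : Fin m, (if x (v j) then (1:ℂ) else 0) := by
    simp_rw [expand_pow, Finset.mul_sum]
    exact Finset.sum_comm
  rw [h1, ← Finset.sum_filter_add_sum_filter_not univ
    (fun v : Fin m → Fin n => Function.Injective v)]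
  congr 1
  rw [Finset.sum_congr rfl (fun v hv => Tv_eq f hsym v (Finset.mem_filter.mp hv).2),
    Finset.sum_const, card_inj, nsmul_eq_mul]

lemma T_bound (f : (n : ℕ) → (Fin n → Bool) → ℂ) (B : ℝ)
    (hB : ∀ n, ∑ x : Fin n → Bool, ‖f n x‖ ≤ B)
    {m n : ℕ} (v : Fin m → Fin n) :
    ‖∑ x : Fin n → Bool, f n x * ∏ j : Fin m, (if x (v j) then (1:ℂ) else 0)‖ ≤ B := by
  calc ‖∑ x : Fin n → Bool, f n x * ∏ j : Fin m, (if x (v j) then (1:ℂ) else 0)‖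
      ≤ ∑ x : Fin n → Bool, ‖f n x * ∏ j : Fin m, (if x (v j) then (1:ℂ) else 0)‖ :=
        norm_sum_le _ _
    _ ≤ ∑ x : Fin n → Bool, ‖f n x‖ := by
        refine Finset.sum_le_sum (fun x _ => ?_)
        rw [norm_mul]
        have h1 : ‖∏ j : Fin m, (if x (v j) then (1:ℂ) else 0)‖ ≤ 1 := by
          rw [norm_prod]
          refine Finset.prod_le_one (fun j _ => norm_nonneg _) (fun j _ => ?_)
          split <;> simp
        calc ‖f n x‖ * ‖∏ j : Fin m, (if x (v j) then (1:ℂ) else 0)‖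
            ≤ ‖f n x‖ * 1 := mul_le_mul_of_nonneg_left h1 (norm_nonneg _)
          _ = ‖f n x‖ := mul_one _
    _ ≤ B := hB n

lemma ratio_tendsto (m : ℕ) :
    Tendsto (fun n : ℕ => (n.descFactorial m : ℝ) / (n : ℝ) ^ m) atTop (𝓝 1) := by
  have h : ∀ᶠ n : ℕ in atTop,
      (n.descFactorial m : ℝ) / (n : ℝ) ^ m = ∏ i ∈ range m, (1 - (i : ℝ) / n) := by
    filter_upwards [eventually_ge_atTop (max m 1)] with n hn
    have hm : m ≤ n := le_trans (le_max_left _ _) hn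
    have hn1 : (1 : ℕ) ≤ n := le_trans (le_max_right _ _) hn
    have hn0 : (n : ℝ) ≠ 0 := by positivity
    rw [Nat.descFactorial_eq_prod_range]
    rw [Nat.cast_prod]
    have h2 : ∀ i ∈ range m, ((n - i : ℕ) : ℝ) = (n : ℝ) - i := by
      intro i hi
      exact_mod_cast Nat.cast_sub (le_trans (Finset.mem_range.mp hi).le hm)
    rw [Finset.prod_congr rfl h2]
    rw [eq_comm]
    have h3 : ∀ i ∈ range m, (1 - (i:ℝ)/n) = ((n:ℝ) - i) / n := by
      intro i _; field_simp
    rw [Finset.prod_congr rfl h3, Finset.prod_div_distrib, Finset.prod_const,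
      Finset.card_range]
  rw [tendsto_congr' h]
  have h4 := tendsto_finset_prod (f := fun (i : ℕ) (n : ℕ) => 1 - (i:ℝ)/n)
    (x := atTop) (a := fun _ => 1) (range m) (fun i _ => by
      simpa using tendsto_const_nhds.sub (tendsto_const_div_atTop_nhds_zero_nat (i:ℝ)))
  simpa using h4

lemma moment_tendsto (f : (n : ℕ) → (Fin n → Bool) → ℂ) (B : ℝ) (c : ℂ) (g : Bool → ℂ)
    (hsym : ∀ n (π : Equiv.Perm (Fin n)) (x : Fin n → Bool), f n (x ∘ π) = f n x)
    (hB : ∀ n, ∑ x : Fin n → Bool, ‖f n x‖ ≤ B)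
    (hmarg : ∀ (k : ℕ) (x : Fin k → Bool),
      Tendsto (fun n => ∑ y ∈ univ.filter
            (fun y : Fin n → Bool => ∀ i : Fin n, (h : (i : ℕ) < k) → y i = x ⟨i, h⟩),
          f n y)
        atTop (𝓝 (c * ∏ r : Fin k, g (x r))))
    (m : ℕ) :
    Tendsto (fun n => ∑ x : Fin n → Bool, f n x * ((countOnes x : ℂ) / n) ^ m)
      atTop (𝓝 (c * g true ^ m)) := by
  classical
  set A : ℕ → ℂ := fun n => ∑ y ∈ univ.filter
      (fun y : Fin n → Bool => ∀ i : Fin n, (h : (i : ℕ) < m) → y i = true), f n y with hA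
  have hAlim : Tendsto A atTop (𝓝 (c * g true ^ m)) := by
    have h := hmarg m (fun _ => true)
    have h2 : (c * ∏ _r : Fin m, g true) = c * g true ^ m := by
      rw [Finset.prod_const, Finset.card_univ, Fintype.card_fin]
    rw [h2] at h
    exact h
  set E : ℕ → ℂ := fun n => ∑ v ∈ univ.filter (fun v : Fin m → Fin n => ¬ Function.Injective v),
      ∑ x : Fin n → Bool, f n x * ∏ j : Fin m, (if x (v j) then (1:ℂ) else 0) with hE
  set ρ : ℕ → ℝ := fun n => (n.descFactorial m : ℝ) / (n : ℝ) ^ m with hρ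
  have key : ∀ᶠ n : ℕ in atTop,
      (∑ x : Fin n → Bool, f n x * ((countOnes x : ℂ) / n) ^ m)
        = (ρ n : ℂ) * A n + E n / (n : ℂ) ^ m := by
    filter_upwards [eventually_ge_atTop 1] with n hn
    have hn0 : ((n : ℂ)) ^ m ≠ 0 := pow_ne_zero _ (Nat.cast_ne_zero.mpr (by omega))
    have e1 : ∑ x : Fin n → Bool, f n x * ((countOnes x : ℂ) / n) ^ m
        = (∑ x : Fin n → Bool, f n x * (countOnes x : ℂ) ^ m) / (n : ℂ) ^ m := by
      rw [Finset.sum_div]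
      exact Finset.sum_congr rfl (fun x _ => by rw [div_pow, mul_div_assoc])
    rw [e1, moment_decomp f hsym m n, add_div]
    congr 1
    have e2 : ((ρ n : ℝ) : ℂ) = (n.descFactorial m : ℂ) / (n : ℂ) ^ m := by
      rw [hρ]; push_cast; ring
    rw [e2, div_mul_eq_mul_div]
  have hElim : Tendsto (fun n => E n / (n : ℂ) ^ m) atTop (𝓝 0) := by
    refine squeeze_zero_norm' (a := fun n => (1 - ρ n) * B) ?_ ?_
    case refine_2 =>
      have h7 := ((tendsto_const_nhds : Tendsto (fun _ : ℕ => (1:ℝ)) atTop (𝓝 1)).sub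
        (ratio_tendsto m)).mul (tendsto_const_nhds : Tendsto (fun _ : ℕ => B) atTop (𝓝 B))
      simpa using h7
    filter_upwards [eventually_ge_atTop 1] with n hn
    have hDle : n.descFactorial m ≤ n ^ m := Nat.descFactorial_le_pow n m
    have hcard : #(univ.filter (fun v : Fin m → Fin n => ¬ Function.Injective v))
        = n ^ m - n.descFactorial m := by
      have h5 := Finset.card_filter_add_card_filter_not
        (s := (univ : Finset (Fin m → Fin n))) (p := fun v => Function.Injective v)
      rw [card_inj] at h5
      have h6 : #(univ : Finset (Fin m → Fin n)) = n ^ m := by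
        rw [Finset.card_univ, Fintype.card_fun, Fintype.card_fin, Fintype.card_fin]
      omega
    have hnormE : ‖E n‖ ≤ ((n ^ m - n.descFactorial m : ℕ) : ℝ) * B := by
      calc ‖E n‖ ≤ ∑ v ∈ univ.filter (fun v : Fin m → Fin n => ¬ Function.Injective v),
            ‖∑ x : Fin n → Bool, f n x * ∏ j : Fin m, (if x (v j) then (1:ℂ) else 0)‖ :=
          norm_sum_le _ _
        _ ≤ #(univ.filter (fun v : Fin m → Fin n => ¬ Function.Injective v)) • B :=
          Finset.sum_le_card_nsmul _ _ B (fun v _ => T_bound f B hB v)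
        _ = ((n ^ m - n.descFactorial m : ℕ) : ℝ) * B := by rw [hcard, nsmul_eq_mul]
    have hnR : (0:ℝ) < (n : ℝ) ^ m := by positivity
    calc ‖E n / (n : ℂ) ^ m‖ = ‖E n‖ / (n : ℝ) ^ m := by
          rw [norm_div, norm_pow, Complex.norm_natCast]
      _ ≤ (((n ^ m - n.descFactorial m : ℕ) : ℝ) * B) / (n : ℝ) ^ m := by
          gcongr
      _ = (1 - ρ n) * B := by
          rw [hρ]
          rw [Nat.cast_sub hDle]
          push_cast
          field_simp
  have h1 : Tendsto (fun n => ((ρ n : ℝ) : ℂ)) atTop (𝓝 1) := by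
    have := (Complex.continuous_ofReal.tendsto 1).comp (ratio_tendsto m)
    exact this
  have hmain := (h1.mul hAlim).add hElim
  rw [one_mul, add_zero] at hmain
  exact hmain.congr' (Filter.EventuallyEq.symm key)

lemma poly_tendsto (f : (n : ℕ) → (Fin n → Bool) → ℂ) (B : ℝ) (c : ℂ) (g : Bool → ℂ)
    (hsym : ∀ n (π : Equiv.Perm (Fin n)) (x : Fin n → Bool), f n (x ∘ π) = f n x)
    (hB : ∀ n, ∑ x : Fin n → Bool, ‖f n x‖ ≤ B)
    (hmarg : ∀ (k : ℕ) (x : Fin k → Bool),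
      Tendsto (fun n => ∑ y ∈ univ.filter
            (fun y : Fin n → Bool => ∀ i : Fin n, (h : (i : ℕ) < k) → y i = x ⟨i, h⟩),
          f n y)
        atTop (𝓝 (c * ∏ r : Fin k, g (x r))))
    (p : Polynomial ℂ) :
    Tendsto (fun n => ∑ x : Fin n → Bool, f n x * Polynomial.eval ((countOnes x : ℂ) / n) p)
      atTop (𝓝 (c * Polynomial.eval (g true) p)) := by
  induction p using Polynomial.induction_on' with
  | add p q hp hq =>
      have he : (fun n => ∑ x : Fin n → Bool,
            f n x * Polynomial.eval ((countOnes x : ℂ) / n) (p + q))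
          = fun n => (∑ x : Fin n → Bool, f n x * Polynomial.eval ((countOnes x : ℂ) / n) p)
            + (∑ x : Fin n → Bool, f n x * Polynomial.eval ((countOnes x : ℂ) / n) q) := by
        funext n
        simp [Polynomial.eval_add, mul_add, Finset.sum_add_distrib]
      rw [he, Polynomial.eval_add, mul_add]
      exact hp.add hq
  | monomial k a =>
      have h := (moment_tendsto f B c g hsym hB hmarg k).const_mul a
      have he : (fun n => ∑ x : Fin n → Bool,
            f n x * Polynomial.eval ((countOnes x : ℂ) / n) (Polynomial.monomial k a))
          = fun n => a * ∑ x : Fin n → Bool, f n x * ((countOnes x : ℂ) / n) ^ k := by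
        funext n
        rw [Finset.mul_sum]
        exact Finset.sum_congr rfl (fun x _ => by
          rw [Polynomial.eval_monomial]; ring)
      have ht : c * Polynomial.eval (g true) (Polynomial.monomial k a)
          = a * (c * g true ^ k) := by
        rw [Polynomial.eval_monomial]; ring
      rw [he, ht]
      exact h

lemma g_real (f : (n : ℕ) → (Fin n → Bool) → ℂ) (B : ℝ) (c : ℂ) (g : Bool → ℂ)
    (hsym : ∀ n (π : Equiv.Perm (Fin n)) (x : Fin n → Bool), f n (x ∘ π) = f n x)
    (hB : ∀ n, ∑ x : Fin n → Bool, ‖f n x‖ ≤ B)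
    (hmarg : ∀ (k : ℕ) (x : Fin k → Bool),
      Tendsto (fun n => ∑ y ∈ univ.filter
            (fun y : Fin n → Bool => ∀ i : Fin n, (h : (i : ℕ) < k) → y i = x ⟨i, h⟩),
          f n y)
        atTop (𝓝 (c * ∏ r : Fin k, g (x r))))
    (hc : c ≠ 0) :
    ∃ r : ℝ, r ∈ Set.Icc (0:ℝ) 1 ∧ g true = (r : ℂ) := by
  classical
  by_contra hno
  push_neg at hno
  set z : ℂ := g true with hz
  set K : Set ℂ := (fun r : ℝ => (r : ℂ)) '' Set.Icc 0 1 with hK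
  have hKclosed : IsClosed K :=
    ((isCompact_Icc).image Complex.continuous_ofReal).isClosed
  have hKne : K.Nonempty := ⟨(0:ℂ), ⟨0, by norm_num, by norm_num⟩⟩
  have hzK : z ∉ K := by
    rintro ⟨r, hr, hrz⟩
    exact hno r hr hrz.symm
  set d : ℝ := Metric.infDist z K with hd
  have hd0 : 0 < d := (hKclosed.notMem_iff_infDist_pos hKne).mp hzK
  set M : ℝ := (‖z‖ + 1) ^ 2 with hM
  have hM0 : 0 < M := by positivity
  have hdM : d ^ 2 ≤ M := by
    have h1 : d ≤ ‖z‖ := by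
      have hmem : (((0:ℝ) : ℂ)) ∈ K :=
        Set.mem_image_of_mem (fun r : ℝ => (r:ℂ)) (by norm_num : (0:ℝ) ∈ Set.Icc (0:ℝ) 1)
      have := Metric.infDist_le_dist_of_mem (x := z) hmem
      simpa [Complex.dist_eq] using this
    have h2 : ‖z‖ ≤ ‖z‖ + 1 := by linarith
    calc d ^ 2 ≤ (‖z‖) ^ 2 := by nlinarith [norm_nonneg z]
      _ ≤ M := by rw [hM]; nlinarith [norm_nonneg z]
  set r : ℝ := 1 - d ^ 2 / M with hr
  have hr0 : 0 ≤ r := by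
    rw [hr]
    have := div_le_one_of_le₀ hdM hM0.le
    linarith
  have hr1 : r < 1 := by
    rw [hr]
    have : 0 < d ^ 2 / M := by positivity
    linarith
  set Q : Polynomial ℂ := (Polynomial.X - Polynomial.C z)
      * (Polynomial.X - Polynomial.C ((starRingEnd ℂ) z)) with hQ
  have hQeval : ∀ t : ℝ, Polynomial.eval (t : ℂ) Q = ((Complex.normSq ((t:ℂ) - z) : ℝ) : ℂ) := by
    intro t
    rw [hQ]
    simp only [Polynomial.eval_mul, Polynomial.eval_sub, Polynomial.eval_X, Polynomial.eval_C]
    rw [← Complex.mul_conj ((t:ℂ) - z)]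
    congr 1
    rw [map_sub]
    congr 1
    exact (Complex.conj_ofReal t).symm
  -- the sequence of polynomials
  set P : ℕ → Polynomial ℂ := fun k =>
    (1 - Polynomial.C ((M : ℂ))⁻¹ * Q) ^ k with hP
  have hPz : ∀ k, Polynomial.eval z (P k) = 1 := by
    intro k
    rw [hP]
    simp [hQ, Polynomial.eval_pow]
  have hPt : ∀ k, ∀ t ∈ Set.Icc (0:ℝ) 1, ‖Polynomial.eval ((t:ℂ)) (P k)‖ ≤ r ^ k := by
    intro k t ht
    have hnormlo : d ^ 2 ≤ Complex.normSq ((t:ℂ) - z) := by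
      have h1 : d ≤ dist z ((t:ℂ)) :=
        Metric.infDist_le_dist_of_mem (Set.mem_image_of_mem (fun r : ℝ => (r:ℂ)) ht)
      have h2 : dist z ((t:ℂ)) = ‖(t:ℂ) - z‖ := by
        rw [dist_comm, Complex.dist_eq]
      rw [h2] at h1
      have h3 := Complex.sq_norm ((t:ℂ) - z)
      nlinarith [hd0.le, norm_nonneg ((t:ℂ) - z)]
    have hnormhi : Complex.normSq ((t:ℂ) - z) ≤ M := by
      have h1 : ‖(t:ℂ) - z‖ ≤ ‖z‖ + 1 := by
        calc ‖(t:ℂ) - z‖ ≤ ‖(t:ℂ)‖ + ‖z‖ := by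
              exact norm_sub_le _ _
          _ ≤ 1 + ‖z‖ := by
              have : ‖(t:ℂ)‖ = |t| := by simp
              rw [this, abs_of_nonneg ht.1]
              linarith [ht.2]
          _ = ‖z‖ + 1 := by ring
      have h3 := Complex.sq_norm ((t:ℂ) - z)
      rw [hM]
      nlinarith [norm_nonneg ((t:ℂ) - z), norm_nonneg z]
    have heval : Polynomial.eval ((t:ℂ)) (P k)
        = (((1 - Complex.normSq ((t:ℂ) - z) / M : ℝ) : ℂ)) ^ k := by
      rw [hP]
      simp only [Polynomial.eval_pow, Polynomial.eval_sub, Polynomial.eval_one,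
        Polynomial.eval_mul, Polynomial.eval_C, hQeval t]
      congr 1
      push_cast
      field_simp
    rw [heval]
    rw [norm_pow, Complex.norm_real, Real.norm_eq_abs]
    have hu0 : 0 ≤ 1 - Complex.normSq ((t:ℂ) - z) / M := by
      have := div_le_one_of_le₀ hnormhi hM0.le
      linarith
    have hur : 1 - Complex.normSq ((t:ℂ) - z) / M ≤ r := by
      rw [hr]
      have h9 : d ^ 2 / M ≤ Complex.normSq ((t:ℂ) - z) / M := by gcongr
      linarith
    rw [abs_of_nonneg hu0]
    exact pow_le_pow_left₀ hu0 hur k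
  have hcle : ∀ k : ℕ, ‖c‖ ≤ B * r ^ k := by
    intro k
    have hlim := poly_tendsto f B c g hsym hB hmarg (P k)
    have heq : c * Polynomial.eval (g true) (P k) = c := by
      rw [← hz, hPz k, mul_one]
    rw [heq] at hlim
    have hb : ∀ n, ‖∑ x : Fin n → Bool,
        f n x * Polynomial.eval ((countOnes x : ℂ) / n) (P k)‖ ≤ B * r ^ k := by
      intro n
      have hbd := bound_lemma f B hB n
        (fun t : ℝ => Polynomial.eval ((t:ℂ)) (P k)) (r ^ k) (hPt k)
      have hsums : ∑ x : Fin n → Bool, f n x * Polynomial.eval ((countOnes x : ℂ) / n) (P k)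
          = ∑ x : Fin n → Bool,
              f n x * Polynomial.eval ((((countOnes x : ℝ) / n : ℝ)) : ℂ) (P k) := by
        refine Finset.sum_congr rfl (fun x _ => ?_)
        norm_num
      rw [hsums]
      exact hbd
    exact le_of_tendsto hlim.norm (Filter.Eventually.of_forall hb)
  have hlim0 : Tendsto (fun k : ℕ => B * r ^ k) atTop (𝓝 0) := by
    have := (tendsto_pow_atTop_nhds_zero_of_lt_one hr0 hr1).const_mul B
    simpa using this
  have hfin : ‖c‖ ≤ 0 := ge_of_tendsto hlim0 (Filter.Eventually.of_forall hcle)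
  exact hc (norm_le_zero_iff.mp hfin)

lemma weier (G : ℂ → ℂ) (hG : Continuous G) (ε : ℝ) (hε : 0 < ε) :
    ∃ p : Polynomial ℂ, ∀ t ∈ Set.Icc (0:ℝ) 1,
      ‖G ((t:ℝ):ℂ) - Polynomial.eval ((t:ℝ):ℂ) p‖ < ε := by
  have hcont_re : ContinuousOn (fun t : ℝ => (G ((t:ℝ):ℂ)).re) (Set.Icc 0 1) :=
    (Complex.continuous_re.comp (hG.comp Complex.continuous_ofReal)).continuousOn
  have hcont_im : ContinuousOn (fun t : ℝ => (G ((t:ℝ):ℂ)).im) (Set.Icc 0 1) :=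
    (Complex.continuous_im.comp (hG.comp Complex.continuous_ofReal)).continuousOn
  obtain ⟨pre, hre⟩ := exists_polynomial_near_of_continuousOn 0 1 _ hcont_re (ε/2) (by linarith)
  obtain ⟨pim, him⟩ := exists_polynomial_near_of_continuousOn 0 1 _ hcont_im (ε/2) (by linarith)
  refine ⟨pre.map (algebraMap ℝ ℂ) + Polynomial.C Complex.I * pim.map (algebraMap ℝ ℂ), ?_⟩
  intro t ht
  have hevalre : Polynomial.eval ((t:ℝ):ℂ) (pre.map (algebraMap ℝ ℂ))
      = ((Polynomial.eval t pre : ℝ) : ℂ) := by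
    rw [Polynomial.eval_map]
    exact Polynomial.eval₂_at_apply (algebraMap ℝ ℂ) t
  have hevalim : Polynomial.eval ((t:ℝ):ℂ) (pim.map (algebraMap ℝ ℂ))
      = ((Polynomial.eval t pim : ℝ) : ℂ) := by
    rw [Polynomial.eval_map]
    exact Polynomial.eval₂_at_apply (algebraMap ℝ ℂ) t
  have hdiff : G ((t:ℝ):ℂ) - Polynomial.eval ((t:ℝ):ℂ)
        (pre.map (algebraMap ℝ ℂ) + Polynomial.C Complex.I * pim.map (algebraMap ℝ ℂ))
      = (((G ((t:ℝ):ℂ)).re - Polynomial.eval t pre : ℝ) : ℂ)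
        + (((G ((t:ℝ):ℂ)).im - Polynomial.eval t pim : ℝ) : ℂ) * Complex.I := by
    rw [Polynomial.eval_add, Polynomial.eval_mul, Polynomial.eval_C, hevalre, hevalim]
    apply Complex.ext <;> simp
  rw [hdiff]
  set a : ℝ := (G ((t:ℝ):ℂ)).re - Polynomial.eval t pre with ha
  set b : ℝ := (G ((t:ℝ):ℂ)).im - Polynomial.eval t pim with hb
  have hnorm : ‖(a:ℂ) + (b:ℂ) * Complex.I‖ ≤ |a| + |b| := by
    calc ‖(a:ℂ) + (b:ℂ) * Complex.I‖ ≤ ‖(a:ℂ)‖ + ‖(b:ℂ) * Complex.I‖ := norm_add_le _ _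
      _ = |a| + |b| := by
        rw [norm_mul, Complex.norm_real, Complex.norm_real, Complex.norm_I, mul_one,
          Real.norm_eq_abs, Real.norm_eq_abs]
  have h1 := hre t ht
  have h2 := him t ht
  rw [abs_sub_comm] at h1 h2
  calc ‖(a:ℂ) + (b:ℂ) * Complex.I‖ ≤ |a| + |b| := hnorm
    _ < ε/2 + ε/2 := by rw [ha, hb]; exact add_lt_add h1 h2
    _ = ε := by ring

/-- Key combinatorial lemma, part (i).  Let `f n : {0,1}^n → ℂ` be symmetric with
`∑_x |f n x| ≤ B`, and suppose that for each fixed `k` and `x ∈ {0,1}^k` the partial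
sums over the remaining coordinates converge to `c · g(x₁)⋯g(x_k)`.  Then for every
continuous `G`, `∑_x f n x · G(N(x)/n) → c · G(g(1))`. -/
theorem stmt_4 (f : (n : ℕ) → (Fin n → Bool) → ℂ) (B : ℝ) (c : ℂ) (g : Bool → ℂ)
    (hsym : ∀ n (π : Equiv.Perm (Fin n)) (x : Fin n → Bool), f n (x ∘ π) = f n x)
    (hB : ∀ n, ∑ x : Fin n → Bool, ‖f n x‖ ≤ B)
    (hmarg : ∀ (k : ℕ) (x : Fin k → Bool),
      Tendsto (fun n => ∑ y ∈ univ.filter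
            (fun y : Fin n → Bool => ∀ i : Fin n, (h : (i : ℕ) < k) → y i = x ⟨i, h⟩),
          f n y)
        atTop (𝓝 (c * ∏ r : Fin k, g (x r))))
    (G : ℂ → ℂ) (hG : Continuous G) :
    Tendsto (fun n => ∑ x : Fin n → Bool, f n x * G ((countOnes x : ℂ) / n))
      atTop (𝓝 (c * G (g true))) := by
  classical
  have hB0 : 0 ≤ B :=
    le_trans (Finset.sum_nonneg (fun x _ => norm_nonneg (f 0 x))) (hB 0)
  rw [Metric.tendsto_atTop]
  intro ε hε
  have hden : 0 < B + ‖c‖ + 1 := by positivity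
  set ε' : ℝ := ε / (2 * (B + ‖c‖ + 1)) with hε'def
  have hε' : 0 < ε' := by positivity
  obtain ⟨p, hp⟩ := weier G hG ε' hε'
  have h2 := poly_tendsto f B c g hsym hB hmarg p
  rw [Metric.tendsto_atTop] at h2
  obtain ⟨N, hN⟩ := h2 ε' hε'
  refine ⟨N, fun n hn => ?_⟩
  set SG := ∑ x : Fin n → Bool, f n x * G ((countOnes x : ℂ) / n) with hSG
  set SP := ∑ x : Fin n → Bool, f n x * Polynomial.eval ((countOnes x : ℂ) / n) p with hSP
  have hbnd := bound_lemma f B hB n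
      (fun t : ℝ => G ((t:ℝ):ℂ) - Polynomial.eval ((t:ℝ):ℂ) p) ε' (fun t ht => (hp t ht).le)
  have hfirst : ‖SG - SP‖ ≤ B * ε' := by
    have heq : SG - SP = ∑ x : Fin n → Bool,
        f n x * (G ((((countOnes x : ℝ) / n : ℝ)) : ℂ)
          - Polynomial.eval ((((countOnes x : ℝ) / n : ℝ)) : ℂ) p) := by
      rw [hSG, hSP, ← Finset.sum_sub_distrib]
      refine Finset.sum_congr rfl (fun x _ => ?_)
      have hcast : ((countOnes x : ℂ) / n) = ((((countOnes x : ℝ) / n : ℝ)) : ℂ) := by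
        push_cast; ring
      rw [hcast]; ring
    rw [heq]
    exact hbnd
  have hthird : ‖c * Polynomial.eval (g true) p - c * G (g true)‖ ≤ ‖c‖ * ε' := by
    by_cases hc : c = 0
    · simp [hc]
    · obtain ⟨rr, hrr, hgr⟩ := g_real f B c g hsym hB hmarg hc
      rw [← mul_sub, norm_mul, hgr]
      have h5 := hp rr hrr
      rw [norm_sub_rev] at h5
      exact mul_le_mul_of_nonneg_left h5.le (norm_nonneg c)
  have h4 := hN n hn
  rw [dist_eq_norm] at h4 ⊢
  have htri : ‖SG - c * G (g true)‖ ≤ ‖SG - SP‖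
      + (‖SP - c * Polynomial.eval (g true) p‖
        + ‖c * Polynomial.eval (g true) p - c * G (g true)‖) := by
    have e : SG - c * G (g true) = (SG - SP) + ((SP - c * Polynomial.eval (g true) p)
        + (c * Polynomial.eval (g true) p - c * G (g true))) := by ring
    rw [e]
    exact (norm_add_le _ _).trans (add_le_add le_rfl (norm_add_le _ _))
  have hkey : (B + ‖c‖ + 1) * ε' = ε / 2 := by
    rw [hε'def]
    field_simp
  have : ‖SG - c * G (g true)‖ < (B + ‖c‖ + 1) * ε' := by
    have hc' : ‖c‖ * ε' ≥ 0 := by positivity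
    nlinarith [hfirst, hthird, h4, hε']
  rw [hkey] at this
  linarith
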